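/- arXiv:2204.06432 — 2 statements merged into one kernel-verified Lean document; each statement's English description precedes it below -/
import Mathlib

section
/- Let Λ be a field with a non-Archimedean additive valuation val, let S ⊂ ℤⁿ be a finite nonempty set, and let c: S → Λ* be nonzero coefficients. If z ∈ (Λ*)ⁿ satisfies ∑_{α ∈ S} c_α z^α = 0, then the minimum over α ∈ S of val(c_α) + ⟨α, val z⟩ is attained for at least two distinct elements of S, where val z = (val z₁, …, val z_n). Equivalently, val z lies in the tropical hypersurface of the tropical polynomial f(q) = min_{α∈S}(val(c_α) + ⟨α, q⟩). -/
/-- Kapranov-type statement: if `z ∈ (Λ*)ⁿ` is a root of `∑_{α ∈ S} c_α z^α`, then the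
minimum of `val (c_α) + ⟨α, val z⟩` over `α ∈ S` is attained at least twice, i.e. `val z`
lies in the tropical hypersurface of `f(q) = min_α (val (c_α) + ⟨α, q⟩)`. -/
theorem root_tropicalizes_to_tropical_hypersurface {Λ : Type*} [Field Λ]
    (val : Λ → WithTop ℝ)
    (hval0 : ∀ x, val x = ⊤ ↔ x = 0)
    (hvalmul : ∀ x y, val (x * y) = val x + val y)
    (hvaladd : ∀ x y, min (val x) (val y) ≤ val (x + y))
    (n : ℕ) (S : Finset (Fin n → ℤ)) (hS : S.Nonempty)
    (c : (Fin n → ℤ) → Λ) (hc : ∀ α ∈ S, c α ≠ 0)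
    (z : Fin n → Λ) (hz : ∀ i, z i ≠ 0)
    (vz : Fin n → ℝ) (hvz : ∀ i, val (z i) = (vz i : WithTop ℝ))
    (vc : (Fin n → ℤ) → ℝ) (hvc : ∀ α ∈ S, val (c α) = (vc α : WithTop ℝ))
    (hroot : ∑ α ∈ S, c α * ∏ i, z i ^ (α i) = 0) :
    ∃ α ∈ S, ∃ β ∈ S, α ≠ β ∧
      (∀ γ ∈ S, vc α + ∑ i, (α i : ℝ) * vz i ≤ vc γ + ∑ i, (γ i : ℝ) * vz i) ∧
      vc α + ∑ i, (α i : ℝ) * vz i = vc β + ∑ i, (β i : ℝ) * vz i := by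
  -- basic valuation facts
  have hval1 : val 1 = 0 := by
    have h := hvalmul 1 1
    rw [mul_one] at h
    have hne : val 1 ≠ ⊤ := by simp [hval0]
    lift val 1 to ℝ using hne with r hr
    rw [← WithTop.coe_add] at h
    have hr' : r = r + r := by exact_mod_cast h
    have : r = 0 := by linarith
    exact_mod_cast this
  have hvalneg : ∀ x : Λ, val (-x) = val x := by
    have hm1 : val (-1 : Λ) = 0 := by
      have h := hvalmul (-1 : Λ) (-1)
      rw [neg_mul_neg, one_mul, hval1] at h
      have hne : val (-1 : Λ) ≠ ⊤ := by simp [hval0]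
      lift val (-1 : Λ) to ℝ using hne with r hr
      rw [← WithTop.coe_add] at h
      have hr' : (0 : ℝ) = r + r := by exact_mod_cast h
      have : r = 0 := by linarith
      exact_mod_cast this
    intro x
    have := hvalmul (-1 : Λ) x
    rw [neg_one_mul, hm1, zero_add] at this
    exact this
  have hvalinv : ∀ (x : Λ), x ≠ 0 → ∀ r : ℝ, val x = (r : WithTop ℝ) →
      val x⁻¹ = ((-r : ℝ) : WithTop ℝ) := by
    intro x hx r hr
    have h := hvalmul x x⁻¹
    rw [mul_inv_cancel₀ hx, hval1, hr] at h
    have hne : val x⁻¹ ≠ ⊤ := by simp [hval0, hx]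
    lift val x⁻¹ to ℝ using hne with s hs
    rw [← WithTop.coe_add] at h
    have h' : (0 : ℝ) = r + s := by exact_mod_cast h
    have : s = -r := by linarith
    exact_mod_cast this
  have hvalpow : ∀ (x : Λ), x ≠ 0 → ∀ r : ℝ, val x = (r : WithTop ℝ) → ∀ m : ℕ,
      val (x ^ m) = (((m : ℝ) * r : ℝ) : WithTop ℝ) := by
    intro x hx r hr m
    induction m with
    | zero => simpa using hval1
    | succ k ih =>
      rw [pow_succ, hvalmul, ih, hr, ← WithTop.coe_add]
      congr 1
      push_cast
      ring
  have hvalzpow : ∀ (x : Λ), x ≠ 0 → ∀ r : ℝ, val x = (r : WithTop ℝ) → ∀ k : ℤ,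
      val (x ^ k) = (((k : ℝ) * r : ℝ) : WithTop ℝ) := by
    intro x hx r hr k
    cases k with
    | ofNat m => rw [Int.ofNat_eq_coe, zpow_natCast, hvalpow x hx r hr m]; push_cast; ring_nf
    | negSucc m =>
      rw [zpow_negSucc]
      have h := hvalinv (x ^ (m + 1)) (pow_ne_zero _ hx) ((m + 1 : ℝ) * r)
        (by rw [hvalpow x hx r hr (m + 1)]; push_cast; ring_nf)
      rw [h]
      congr 1
      push_cast
      ring
  -- valuation of each monomial term
  set w : (Fin n → ℤ) → ℝ := fun α => vc α + ∑ i, (α i : ℝ) * vz i with hw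
  have hprod : ∀ α : Fin n → ℤ,
      val (∏ i, z i ^ (α i)) = ((∑ i, (α i : ℝ) * vz i : ℝ) : WithTop ℝ) := by
    intro α
    classical
    induction (Finset.univ : Finset (Fin n)) using Finset.induction with
    | empty => simpa using hval1
    | insert a s hni ih =>
      rw [Finset.prod_insert hni, Finset.sum_insert hni, hvalmul, ih,
        hvalzpow (z a) (hz a) (vz a) (hvz a) (α a), ← WithTop.coe_add]
  have hterm : ∀ γ ∈ S, val (c γ * ∏ i, z i ^ (γ i)) = ((w γ : ℝ) : WithTop ℝ) := by
    intro γ hγ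
    rw [hvalmul, hvc γ hγ, hprod γ, ← WithTop.coe_add]
  -- lower bound on valuation of a sum
  have hvalsum : ∀ (s : Finset (Fin n → ℤ)) (t : ℝ),
      (∀ γ ∈ s, ((t : ℝ) : WithTop ℝ) < val (c γ * ∏ i, z i ^ (γ i))) →
      ((t : ℝ) : WithTop ℝ) < val (∑ γ ∈ s, c γ * ∏ i, z i ^ (γ i)) := by
    intro s
    classical
    induction s using Finset.induction with
    | empty =>
      intro t _
      rw [Finset.sum_empty]
      have : val (0 : Λ) = ⊤ := (hval0 0).mpr rfl
      rw [this]
      exact WithTop.coe_lt_top t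
    | insert a s hni ih =>
      intro t ht
      rw [Finset.sum_insert hni]
      refine lt_of_lt_of_le ?_ (hvaladd _ _)
      exact lt_min (ht a (Finset.mem_insert_self a s))
        (ih t fun γ hγ => ht γ (Finset.mem_insert_of_mem hγ))
  -- pick minimizer
  obtain ⟨α, hαS, hαmin⟩ := S.exists_min_image w hS
  refine ⟨α, hαS, ?_⟩
  by_contra hcon
  push_neg at hcon
  have hstrict : ∀ γ ∈ S.erase α, ((w α : ℝ) : WithTop ℝ) < val (c γ * ∏ i, z i ^ (γ i)) := by
    intro γ hγ
    obtain ⟨hne, hγS⟩ := Finset.mem_erase.mp hγ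
    rw [hterm γ hγS]
    have hle := hαmin γ hγS
    have hneq : w α ≠ w γ := by
      intro heq
      exact (hcon γ hγS (Ne.symm hne) hαmin) heq
    exact_mod_cast lt_of_le_of_ne hle hneq
  have hsplit : c α * ∏ i, z i ^ (α i) = -∑ γ ∈ S.erase α, c γ * ∏ i, z i ^ (γ i) := by
    have := Finset.add_sum_erase S (fun γ => c γ * ∏ i, z i ^ (γ i)) hαS
    rw [hroot] at this
    linear_combination this
  have h1 : val (c α * ∏ i, z i ^ (α i)) = ((w α : ℝ) : WithTop ℝ) := hterm α hαS
  rw [hsplit, hvalneg] at h1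
  have h2 := hvalsum (S.erase α) (w α) hstrict
  rw [h1] at h2
  exact lt_irrefl _ h2
end

section
/- Let P ⊂ ℝⁿ be a nonempty set and let 𝒪_P be the set of families (f_A)_{A ∈ ℤⁿ} of Novikov field elements such that for every p ∈ P, val(f_A) + ⟨A, p⟩ → ∞ as |A| → ∞. Then 𝒪_P is closed under addition and under the convolution product (f · g)_A = ∑_{B + C = A} f_B g_C; in particular, each coefficient (f·g)_A is a convergent (valuation-summable) sum in Λ, and f·g again lies in 𝒪_P. Hence 𝒪_P is a commutative ring. -/
open HahnSeries

section PolytopeAux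

variable {n : ℕ}

/-- The pairing `⟨A, p⟩`. -/
private abbrev pairingR (A : Fin n → ℤ) (p : Fin n → ℝ) : ℝ := ∑ i, (A i : ℝ) * p i

/-- The `ℓ¹` size of a lattice vector. -/
private abbrev anorm (A : Fin n → ℤ) : ℕ := ∑ i, (A i).natAbs

private lemma pairing_sub_add (A B : Fin n → ℤ) (p : Fin n → ℝ) :
    pairingR B p + pairingR (A - B) p = pairingR A p := by
  rw [← Finset.sum_add_distrib]
  refine Finset.sum_congr rfl fun i _ => ?_
  simp only [Pi.sub_apply]
  push_cast
  ring

private lemma anorm_triangle (A B : Fin n → ℤ) :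
    anorm A ≤ anorm B + anorm (A - B) := by
  rw [← Finset.sum_add_distrib]
  refine Finset.sum_le_sum fun i _ => ?_
  simp only [Pi.sub_apply]
  omega

private lemma finite_anorm_lt (N : ℕ) : {B : Fin n → ℤ | anorm B < N}.Finite := by
  apply Set.Finite.subset (Set.finite_Icc (fun _ => -(N : ℤ)) (fun _ => (N : ℤ)))
  intro B hB
  simp only [Set.mem_setOf_eq] at hB
  have key : ∀ i, -(N : ℤ) ≤ B i ∧ B i ≤ (N : ℤ) := by
    intro i
    have h1 : (B i).natAbs ≤ anorm B :=
      Finset.single_le_sum (f := fun j => (B j).natAbs)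
        (fun j _ => Nat.zero_le _) (Finset.mem_univ i)
    omega
  exact ⟨fun i => (key i).1, fun i => (key i).2⟩

private lemma coe_untop'_le (x : WithTop ℝ) : ((x.untopD 0 : ℝ) : WithTop ℝ) ≤ x := by
  induction x using WithTop.recTopCoe with
  | top => exact le_top
  | coe r => simp

/-- From the membership condition (at a single `p`) a uniform lower bound for
`val (f_A) + ⟨A, p⟩` over all `A`. -/
private lemma exists_lb (f : (Fin n → ℤ) → HahnSeries ℝ ℂ) (p : Fin n → ℝ)
    (hf : ∀ M : ℝ, ∃ N : ℕ, ∀ A, N ≤ anorm A →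
      (M : WithTop ℝ) ≤ addVal ℝ ℂ (f A) + (pairingR A p : WithTop ℝ)) :
    ∃ c : ℝ, ∀ A, (c : WithTop ℝ) ≤ addVal ℝ ℂ (f A) + (pairingR A p : WithTop ℝ) := by
  obtain ⟨N, hN⟩ := hf 0
  classical
  set S := (finite_anorm_lt (n := n) N).toFinset with hS
  set T : Finset ℝ :=
    insert 0 (S.image fun B => (addVal ℝ ℂ (f B) + (pairingR B p : WithTop ℝ)).untopD 0) with hT
  have hTne : T.Nonempty := ⟨0, Finset.mem_insert_self _ _⟩
  refine ⟨T.min' hTne, fun A => ?_⟩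
  by_cases hA : N ≤ anorm A
  · refine le_trans ?_ (hN A hA)
    exact_mod_cast WithTop.coe_le_coe.mpr (Finset.min'_le _ _ (Finset.mem_insert_self _ _))
  · have hmem : A ∈ S := by
      rw [hS, Set.Finite.mem_toFinset]
      exact not_le.mp hA
    have h1 : T.min' hTne ≤ (addVal ℝ ℂ (f A) + (pairingR A p : WithTop ℝ)).untopD 0 :=
      Finset.min'_le _ _ (Finset.mem_insert_of_mem (Finset.mem_image_of_mem _ hmem))
    exact le_trans (WithTop.coe_le_coe.mpr h1) (coe_untop'_le _)

/-- Multiplicativity of the valuation combined with addition of pairings. -/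
private lemma val_mul_bound (x y : HahnSeries ℝ ℂ) (a b M₁ M₂ : ℝ)
    (hx : (M₁ : WithTop ℝ) ≤ addVal ℝ ℂ x + (a : WithTop ℝ))
    (hy : (M₂ : WithTop ℝ) ≤ addVal ℝ ℂ y + (b : WithTop ℝ)) :
    ((M₁ + M₂ : ℝ) : WithTop ℝ) ≤ addVal ℝ ℂ (x * y) + ((a + b : ℝ) : WithTop ℝ) := by
  rw [(addVal ℝ ℂ).map_mul, WithTop.coe_add, WithTop.coe_add, add_add_add_comm]
  exact add_le_add hx hy

/-- To bound `val x + q` from below it suffices to bound `r + q` for all `r` in the support. -/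
private lemma le_addVal_add (x : HahnSeries ℝ ℂ) (q M : ℝ)
    (h : ∀ r : ℝ, x.coeff r ≠ 0 → (M : WithTop ℝ) ≤ (r : WithTop ℝ) + (q : WithTop ℝ)) :
    (M : WithTop ℝ) ≤ addVal ℝ ℂ x + (q : WithTop ℝ) := by
  by_cases hx : x = 0
  · rw [hx, (addVal ℝ ℂ).map_zero, top_add]
    exact le_top
  · rw [addVal_apply_of_ne hx]
    exact h x.order (coeff_order_eq_zero.not.mpr hx)

/-- Growth of the valuations of the convolution terms (for a fixed `A`), as `|B| → ∞`. -/
private lemma prod_growth (f g : (Fin n → ℤ) → HahnSeries ℝ ℂ) (p : Fin n → ℝ) (c_g : ℝ)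
    (hcg : ∀ C, (c_g : WithTop ℝ) ≤ addVal ℝ ℂ (g C) + (pairingR C p : WithTop ℝ))
    (hf : ∀ M : ℝ, ∃ N : ℕ, ∀ B, N ≤ anorm B →
      (M : WithTop ℝ) ≤ addVal ℝ ℂ (f B) + (pairingR B p : WithTop ℝ))
    (A : Fin n → ℤ) (t : ℝ) :
    ∃ N : ℕ, ∀ B, N ≤ anorm B →
      (t : WithTop ℝ) ≤ addVal ℝ ℂ (f B * g (A - B)) + (pairingR A p : WithTop ℝ) := by
  obtain ⟨N₁, hN₁⟩ := hf (t - c_g)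
  refine ⟨N₁, fun B hB => ?_⟩
  have := val_mul_bound (f B) (g (A - B)) (pairingR B p) (pairingR (A - B) p) _ _
    (hN₁ B hB) (hcg (A - B))
  rw [pairing_sub_add A B p, show t - c_g + c_g = t by ring] at this
  exact this

/-- Construction of the summable family of convolution terms. -/
private lemma exists_family (f g : (Fin n → ℤ) → HahnSeries ℝ ℂ) (p : Fin n → ℝ) (c_g : ℝ)
    (hcg : ∀ C, (c_g : WithTop ℝ) ≤ addVal ℝ ℂ (g C) + (pairingR C p : WithTop ℝ))
    (hf : ∀ M : ℝ, ∃ N : ℕ, ∀ B, N ≤ anorm B →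
      (M : WithTop ℝ) ≤ addVal ℝ ℂ (f B) + (pairingR B p : WithTop ℝ))
    (A : Fin n → ℤ) :
    ∃ F : SummableFamily ℝ ℂ (Fin n → ℤ), ∀ B, F B = f B * g (A - B) := by
  classical
  set T : (Fin n → ℤ) → HahnSeries ℝ ℂ := fun B => f B * g (A - B) with hTdef
  have hcos : ∀ r : ℝ, {B | (T B).coeff r ≠ 0}.Finite := by
    intro r
    obtain ⟨N, hN⟩ := prod_growth f g p c_g hcg hf A (r + pairingR A p + 1)
    apply (finite_anorm_lt N).subset
    intro B hB
    simp only [Set.mem_setOf_eq] at hB ⊢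
    by_contra hcon
    push_neg at hcon
    have h1 := hN B hcon
    have h2 : addVal ℝ ℂ (T B) ≤ (r : WithTop ℝ) := addVal_le_of_coeff_ne_zero hB
    have h3 : addVal ℝ ℂ (T B) + (pairingR A p : WithTop ℝ)
        ≤ ((r + pairingR A p : ℝ) : WithTop ℝ) := by
      rw [WithTop.coe_add]
      exact add_le_add_left h2 _
    have h4 : ((r + pairingR A p + 1 : ℝ) : WithTop ℝ) ≤ ((r + pairingR A p : ℝ) : WithTop ℝ) :=
      le_trans h1 h3
    have := WithTop.coe_le_coe.mp h4
    linarith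
  have hpwo : Set.IsPWO (⋃ B : Fin n → ℤ, (T B).support) := by
    rw [Set.isPWO_iff_isWF, Set.isWF_iff_no_descending_seq]
    intro u hu hmem
    obtain ⟨N, hN⟩ := prod_growth f g p c_g hcg hf A (u 0 + pairingR A p + 1)
    have hBk : ∀ k : ℕ, ∃ B, u k ∈ (T B).support := fun k => Set.mem_iUnion.mp (hmem k)
    choose Bk hBk using hBk
    have hsmall : ∀ k, anorm (Bk k) < N := by
      intro k
      by_contra hcon
      push_neg at hcon
      have h1 := hN (Bk k) hcon
      have h2 : addVal ℝ ℂ (T (Bk k)) ≤ ((u k : ℝ) : WithTop ℝ) :=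
        addVal_le_of_coeff_ne_zero (hBk k)
      have h3 : (u k : ℝ) ≤ u 0 := hu.antitone (Nat.zero_le k)
      have h4 : ((u 0 + pairingR A p + 1 : ℝ) : WithTop ℝ)
          ≤ ((u 0 + pairingR A p : ℝ) : WithTop ℝ) := by
        calc ((u 0 + pairingR A p + 1 : ℝ) : WithTop ℝ)
            ≤ addVal ℝ ℂ (T (Bk k)) + (pairingR A p : WithTop ℝ) := h1
          _ ≤ ((u k : ℝ) : WithTop ℝ) + (pairingR A p : WithTop ℝ) := add_le_add_left h2 _
          _ = ((u k + pairingR A p : ℝ) : WithTop ℝ) := (WithTop.coe_add _ _).symm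
          _ ≤ _ := WithTop.coe_le_coe.mpr (by linarith)
      have := WithTop.coe_le_coe.mp h4
      linarith
    -- pigeonhole: some fiber is infinite
    haveI : Finite {B : Fin n → ℤ // anorm B < N} := (finite_anorm_lt (n := n) N).to_subtype
    set v : ℕ → {B : Fin n → ℤ // anorm B < N} := fun k => ⟨Bk k, hsmall k⟩ with hv
    obtain ⟨b, hb⟩ := Finite.exists_infinite_fiber v
    have hK : (v ⁻¹' {b}).Infinite := Set.infinite_coe_iff.mp hb
    have hsub : u '' (v ⁻¹' {b}) ⊆ (T b.val).support := by
      rintro x ⟨k, hk, rfl⟩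
      have hvk : v k = b := Set.mem_singleton_iff.mp (Set.mem_preimage.mp hk)
      have hbk : Bk k = b.val := congrArg Subtype.val hvk
      exact hbk ▸ hBk k
    have hW : (u '' (v ⁻¹' {b})).IsWF := ((T b.val).isWF_support).mono hsub
    obtain ⟨k₀, hk₀⟩ := hK.nonempty
    have hWne : (u '' (v ⁻¹' {b})).Nonempty := ⟨u k₀, k₀, hk₀, rfl⟩
    obtain ⟨k₁, hk₁, hk₁eq⟩ := hW.min_mem hWne
    obtain ⟨k₂, hk₂, hk₂gt⟩ := hK.exists_gt k₁
    exact hW.not_lt_min hWne ⟨k₂, hk₂, rfl⟩ (hk₁eq ▸ hu hk₂gt)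
  exact ⟨⟨T, hpwo, hcos⟩, fun B => rfl⟩

end PolytopeAux

/-- Membership in the polytope algebra `𝒪_P`: for every `p ∈ P`,
`val (f_A) + ⟨A, p⟩ → ∞` as `|A| → ∞`. -/
def MemPolytopeAlgebra {n : ℕ} (P : Set (Fin n → ℝ))
    (f : (Fin n → ℤ) → HahnSeries ℝ ℂ) : Prop :=
  ∀ p ∈ P, ∀ M : ℝ, ∃ N : ℕ, ∀ A : Fin n → ℤ, N ≤ ∑ i, (A i).natAbs →
    (M : WithTop ℝ) ≤ (HahnSeries.addVal ℝ ℂ) (f A) + ((∑ i, (A i : ℝ) * p i : ℝ) : WithTop ℝ)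

/-- The polytope algebra `𝒪_P` is closed under addition, and under the convolution product:
each coefficient `(f·g)_A = ∑_{B+C=A} f_B g_C` is a convergent (summable-family) sum in the
Novikov field, and the resulting family again lies in `𝒪_P`. -/
theorem polytopeAlgebra_closed_add_mul {n : ℕ} (P : Set (Fin n → ℝ)) (hP : P.Nonempty)
    (f g : (Fin n → ℤ) → HahnSeries ℝ ℂ)
    (hf : MemPolytopeAlgebra P f) (hg : MemPolytopeAlgebra P g) :
    MemPolytopeAlgebra P (fun A => f A + g A) ∧
    ∃ h : (Fin n → ℤ) → HahnSeries ℝ ℂ, MemPolytopeAlgebra P h ∧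
      ∀ A : Fin n → ℤ, ∃ F : HahnSeries.SummableFamily ℝ ℂ (Fin n → ℤ),
        (∀ B, F B = f B * g (A - B)) ∧ h A = F.hsum := by
  constructor
  · -- closure under addition
    intro p hp M
    obtain ⟨N₁, h₁⟩ := hf p hp M
    obtain ⟨N₂, h₂⟩ := hg p hp M
    refine ⟨max N₁ N₂, fun A hA => ?_⟩
    have e1 := h₁ A (le_trans (le_max_left _ _) hA)
    have e2 := h₂ A (le_trans (le_max_right _ _) hA)
    have hmin : min (addVal ℝ ℂ (f A)) (addVal ℝ ℂ (g A)) ≤ addVal ℝ ℂ (f A + g A) :=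
      (addVal ℝ ℂ).map_add _ _
    calc (M : WithTop ℝ)
        ≤ min (addVal ℝ ℂ (f A)) (addVal ℝ ℂ (g A))
            + ((∑ i, (A i : ℝ) * p i : ℝ) : WithTop ℝ) := by
          rw [← min_add_add_right]
          exact le_min e1 e2
      _ ≤ _ := add_le_add_left hmin _
  · -- closure under convolution
    obtain ⟨p₀, hp₀⟩ := hP
    obtain ⟨c_g, hcg⟩ := exists_lb g p₀ (hg p₀ hp₀)
    have key : ∀ A : Fin n → ℤ, ∃ F : HahnSeries.SummableFamily ℝ ℂ (Fin n → ℤ),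
        ∀ B, F B = f B * g (A - B) :=
      fun A => exists_family f g p₀ c_g hcg (hf p₀ hp₀) A
    choose F hFeq using key
    refine ⟨fun A => (F A).hsum, ?_, fun A => ⟨F A, hFeq A, rfl⟩⟩
    intro p hp M
    obtain ⟨cf, hcf'⟩ := exists_lb f p (hf p hp)
    obtain ⟨cg, hcg'⟩ := exists_lb g p (hg p hp)
    obtain ⟨N₁, hN₁⟩ := hf p hp (M - cg)
    obtain ⟨N₂, hN₂⟩ := hg p hp (M - cf)
    refine ⟨N₁ + N₂, fun A hA => ?_⟩
    apply le_addVal_add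
    intro r hr
    rw [HahnSeries.SummableFamily.coeff_hsum] at hr
    obtain ⟨B, hB⟩ : ∃ B, ((F A) B).coeff r ≠ 0 := by
      by_contra hall
      push_neg at hall
      exact hr (finsum_eq_zero_of_forall_eq_zero hall)
    rw [hFeq A B] at hB
    have hval : addVal ℝ ℂ (f B * g (A - B)) ≤ (r : WithTop ℝ) :=
      HahnSeries.addVal_le_of_coeff_ne_zero hB
    have hlow : (M : WithTop ℝ)
        ≤ addVal ℝ ℂ (f B * g (A - B)) + (pairingR A p : WithTop ℝ) := by
      rcases le_or_gt N₁ (anorm B) with hc | hc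
      · have := val_mul_bound (f B) (g (A - B)) _ _ _ _ (hN₁ B hc) (hcg' (A - B))
        rw [pairing_sub_add A B p, show M - cg + cg = M by ring] at this
        exact this
      · have hc2 : N₂ ≤ anorm (A - B) := by
          have ht : N₁ + N₂ ≤ anorm B + anorm (A - B) := le_trans hA (anorm_triangle A B)
          omega
        have := val_mul_bound (f B) (g (A - B)) _ _ _ _ (hcf' B) (hN₂ _ hc2)
        rw [pairing_sub_add A B p, show cf + (M - cf) = M by ring] at this
        exact this
    refine le_trans hlow ?_
    exact add_le_add_left hval _
end
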